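/- Let $V = K^{2n}$ with the hyperbolic quadratic form $Q(x) = \sum_{i=1}^n x_{-i}x_i$ over a field $K$, $n \geq 2$, and let $b$ be the associated bilinear form. Let $p, u$ be two distinct singular points (isotropic one-dimensional subspaces) of the quadric with $b(p,u) \neq 0$ (i.e. $p$ and $u$ are not collinear on the quadric). Then the set of singular points orthogonal to every singular point of $p^\perp \cap u^\perp$ is exactly $\{p, u\}$. -/

import Mathlib

/-- The hyperbolic quadratic form `Q(x) = ∑ x₋ᵢ xᵢ` on `K^{2n}`, modelled as
`(Fin n → K) × (Fin n → K)`. -/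
def hypQ {K : Type*} [Field K] {n : ℕ} (v : (Fin n → K) × (Fin n → K)) : K :=
  ∑ i : Fin n, v.1 i * v.2 i

/-- The bilinear form obtained by polarizing `hypQ`. -/
def hypB {K : Type*} [Field K] {n : ℕ} (v w : (Fin n → K) × (Fin n → K)) : K :=
  hypQ (v + w) - hypQ v - hypQ w

section helpers
variable {K : Type*} [Field K] {n : ℕ}

lemma hypB_apply (v w : (Fin n → K) × (Fin n → K)) :
    hypB v w = ∑ i : Fin n, (v.1 i * w.2 i + v.2 i * w.1 i) := by
  unfold hypB hypQ
  rw [← Finset.sum_sub_distrib, ← Finset.sum_sub_distrib]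
  refine Finset.sum_congr rfl fun i _ => ?_
  simp [Prod.fst_add, Prod.snd_add]
  ring

lemma hypB_symm (v w : (Fin n → K) × (Fin n → K)) : hypB v w = hypB w v := by
  rw [hypB_apply, hypB_apply]
  exact Finset.sum_congr rfl fun i _ => by ring

lemma hypB_add_right (v x y : (Fin n → K) × (Fin n → K)) :
    hypB v (x + y) = hypB v x + hypB v y := by
  simp only [hypB_apply, Prod.fst_add, Prod.snd_add, Pi.add_apply, ← Finset.sum_add_distrib]
  exact Finset.sum_congr rfl fun i _ => by ring

lemma hypB_smul_right (v x : (Fin n → K) × (Fin n → K)) (c : K) :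
    hypB v (c • x) = c * hypB v x := by
  simp only [hypB_apply, Prod.smul_fst, Prod.smul_snd, Pi.smul_apply, smul_eq_mul,
    Finset.mul_sum]
  exact Finset.sum_congr rfl fun i _ => by ring

lemma hypB_self (v : (Fin n → K) × (Fin n → K)) : hypB v v = 2 * hypQ v := by
  rw [hypB_apply, hypQ, Finset.mul_sum]
  exact Finset.sum_congr rfl fun i _ => by ring

lemma hypB_zero_right (v : (Fin n → K) × (Fin n → K)) : hypB v 0 = 0 := by
  simp [hypB_apply]

lemma hypQ_add (x y : (Fin n → K) × (Fin n → K)) :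
    hypQ (x + y) = hypQ x + hypQ y + hypB x y := by
  rw [hypB]; ring

lemma hypQ_smul (c : K) (x : (Fin n → K) × (Fin n → K)) : hypQ (c • x) = c ^ 2 * hypQ x := by
  rw [hypQ, hypQ, Finset.mul_sum]
  refine Finset.sum_congr rfl fun i _ => ?_
  simp [Prod.smul_fst, Prod.smul_snd, Pi.smul_apply, smul_eq_mul]
  ring

lemma sum_ite_mul (i : Fin n) (c : K) (f : Fin n → K) :
    (∑ k : Fin n, (if k = i then c else 0) * f k) = c * f i := by
  simp [ite_mul]

end helpers

section
variable {K : Type*} [Field K] {n : ℕ}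

lemma dot_span (s t : Fin n → K)
    (h : ∀ a : Fin n → K, (∑ i, a i * s i) = 0 → (∑ i, a i * t i) = 0) :
    ∃ μ : K, t = μ • s := by
  by_cases hs : s = 0
  · refine ⟨0, funext fun i => ?_⟩
    have := h (fun k => if k = i then 1 else 0) (by simp [hs])
    simpa using this
  · obtain ⟨j, hj⟩ : ∃ j, s j ≠ 0 := by
      by_contra hc; push_neg at hc; exact hs (funext hc)
    refine ⟨t j / s j, funext fun i => ?_⟩
    by_cases hij : i = j
    · subst hij; field_simp; rw [Pi.smul_apply, smul_eq_mul, div_mul_cancel₀ _ hj]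
    · have key := h (fun k => (if k = i then s j else 0) + (if k = j then -(s i) else 0)) ?_
      · simp only [add_mul, Finset.sum_add_distrib, ite_mul, zero_mul, neg_mul,
          Finset.sum_ite_eq', Finset.mem_univ, if_true, Finset.sum_neg_distrib] at key
        have : t i = s i * t j / s j := by field_simp; linear_combination key
        simp only [Pi.smul_apply, smul_eq_mul]
        rw [this]; ring
      · simp only [add_mul, Finset.sum_add_distrib, ite_mul, zero_mul, neg_mul,
          Finset.sum_ite_eq', Finset.mem_univ, if_true, Finset.sum_neg_distrib]
        ring

lemma dot_sep (s t : Fin n → K) (h : ∀ μ : K, t ≠ μ • s) :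
    ∃ a : Fin n → K, (∑ i, a i * s i) = 0 ∧ (∑ i, a i * t i) ≠ 0 := by
  by_contra hc
  push_neg at hc
  obtain ⟨μ, hμ⟩ := dot_span s t hc
  exact h μ hμ

end

section construct
variable {K : Type*} [Field K] {n : ℕ}

/-- For a singular `p` and anisotropic `x`, there is a singular `y ⊥ p` with `b(x,y) ≠ 0`. -/
lemma exists_sing (p x : (Fin n → K) × (Fin n → K)) (hpQ : hypQ p = 0) (hx : hypQ x ≠ 0) :
    ∃ y : (Fin n → K) × (Fin n → K), hypQ y = 0 ∧ hypB p y = 0 ∧ hypB x y ≠ 0 := by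
  by_cases h2 : ∃ μ : K, x.2 = μ • p.2
  · by_cases h1 : ∃ μ : K, x.1 = μ • p.1
    · exfalso
      obtain ⟨μ, hμ⟩ := h1
      obtain ⟨lam, hlam⟩ := h2
      apply hx
      rw [hypQ]
      have : ∀ i, x.1 i * x.2 i = (μ * lam) * (p.1 i * p.2 i) := by
        intro i
        rw [hμ, hlam]
        simp only [Pi.smul_apply, smul_eq_mul]
        ring
      rw [Finset.sum_congr rfl fun i _ => this i, ← Finset.mul_sum, ← hypQ, hpQ, mul_zero]
    · push_neg at h1
      obtain ⟨a, ha0, ha1⟩ := dot_sep p.1 x.1 h1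
      refine ⟨(0, a), by simp [hypQ], ?_, ?_⟩
      · rw [hypB_apply]
        simpa [mul_comm] using ha0
      · rw [hypB_apply]
        simp only []
        intro hcon
        apply ha1
        rw [← hcon]
        exact Finset.sum_congr rfl fun i _ => by simp [mul_comm]
  · push_neg at h2
    obtain ⟨a, ha0, ha1⟩ := dot_sep p.2 x.2 h2
    refine ⟨(a, 0), by simp [hypQ], ?_, ?_⟩
    · rw [hypB_apply]
      simpa [mul_comm] using ha0
    · rw [hypB_apply]
      intro hcon
      apply ha1
      rw [← hcon]
      exact Finset.sum_congr rfl fun i _ => by simp [mul_comm]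

/-- Upgrade: a singular `e ⊥ p, u` with `b(x,e) ≠ 0`. -/
lemma exists_perp_sing (p u x : (Fin n → K) × (Fin n → K)) (hpQ : hypQ p = 0)
    (hβ : hypB p u ≠ 0) (hpx : hypB p x = 0) (hux : hypB u x = 0) (hx : hypQ x ≠ 0) :
    ∃ e : (Fin n → K) × (Fin n → K),
      hypQ e = 0 ∧ hypB p e = 0 ∧ hypB u e = 0 ∧ hypB x e ≠ 0 := by
  obtain ⟨y, hyQ, hpy, hxy⟩ := exists_sing p x hpQ hx
  set c : K := hypB u y / hypB p u with hc
  refine ⟨y + (-c) • p, ?_, ?_, ?_, ?_⟩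
  · rw [hypQ_add, hypQ_smul, hypB_smul_right, hyQ, hpQ, hypB_symm y p, hpy]; ring
  · rw [hypB_add_right, hypB_smul_right, hpy, hypB_self, hpQ]; ring
  · rw [hypB_add_right, hypB_smul_right, hypB_symm u p, hc]
    field_simp; ring
  · rw [hypB_add_right, hypB_smul_right, hypB_symm x p, hpx]
    simpa using hxy

end construct

/-- Let `p, u` be two non-collinear singular points of a hyperbolic quadric of rank
`n ≥ 2`.  The singular points orthogonal to every singular point of `p^⊥ ∩ u^⊥` are
exactly `p` and `u`. -/
theorem hyperbolic_perp_perp {K : Type*} [Field K] {n : ℕ} (hn : 2 ≤ n)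
    (p u : (Fin n → K) × (Fin n → K))
    (hp0 : p ≠ 0) (hu0 : u ≠ 0) (hpQ : hypQ p = 0) (huQ : hypQ u = 0)
    (hpu : hypB p u ≠ 0) :
    {w : (Fin n → K) × (Fin n → K) | w ≠ 0 ∧ hypQ w = 0 ∧
        ∀ v : (Fin n → K) × (Fin n → K),
          v ≠ 0 → hypQ v = 0 → hypB p v = 0 → hypB u v = 0 → hypB w v = 0} =
      {w : (Fin n → K) × (Fin n → K) |
        (∃ c : K, c ≠ 0 ∧ w = c • p) ∨ (∃ c : K, c ≠ 0 ∧ w = c • u)} := by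
  ext w
  simp only [Set.mem_setOf_eq]
  constructor
  · rintro ⟨hw0, hwQ, hw⟩
    -- Step 1 : `w` is orthogonal to everything orthogonal to both `p` and `u`.
    have key : ∀ x : (Fin n → K) × (Fin n → K),
        hypB p x = 0 → hypB u x = 0 → hypB w x = 0 := by
      intro x hpx hux
      by_cases hxQ : hypQ x = 0
      · by_cases hx0 : x = 0
        · subst hx0; exact hypB_zero_right w
        · exact hw x hx0 hxQ hpx hux
      · obtain ⟨e, heQ, hpe, hue, hxe⟩ := exists_perp_sing p u x hpQ hpu hpx hux hxQ
        have he0 : e ≠ 0 := fun h => hxe (by rw [h, hypB_zero_right])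
        set lam : K := -(hypQ x) / hypB x e with hlam
        have hx'Q : hypQ (x + lam • e) = 0 := by
          rw [hypQ_add, hypQ_smul, hypB_smul_right, heQ, hlam]
          field_simp; ring
        have hx'0 : x + lam • e ≠ 0 := by
          intro hcon
          apply hxQ
          have hx : x = (-lam) • e := by
            rw [neg_smul]
            exact eq_neg_of_add_eq_zero_left hcon
          rw [hx, hypQ_smul, heQ, mul_zero]
        have hpx' : hypB p (x + lam • e) = 0 := by
          rw [hypB_add_right, hypB_smul_right, hpx, hpe]; ring
        have hux' : hypB u (x + lam • e) = 0 := by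
          rw [hypB_add_right, hypB_smul_right, hux, hue]; ring
        have h1 := hw (x + lam • e) hx'0 hx'Q hpx' hux'
        have h2 := hw e he0 heQ hpe hue
        rw [hypB_add_right, hypB_smul_right, h2, mul_zero, add_zero] at h1
        exact h1
    -- Step 2 : deduce that `w` lies in the span of `p` and `u`.
    set β : K := hypB p u with hβdef
    set aa : K := hypB u w / β with haadef
    set bb : K := hypB p w / β with hbbdef
    set w' := w + (-aa) • p + (-bb) • u with hw'def
    have hpw' : hypB p w' = 0 := by
      rw [hw'def, hypB_add_right, hypB_add_right, hypB_smul_right, hypB_smul_right,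
        hypB_self, hpQ, hbbdef, ← hβdef]
      field_simp; ring
    have huw' : hypB u w' = 0 := by
      rw [hw'def, hypB_add_right, hypB_add_right, hypB_smul_right, hypB_smul_right,
        hypB_symm u p, hypB_self, huQ, haadef, ← hβdef]
      field_simp; ring
    have hall : ∀ z : (Fin n → K) × (Fin n → K), hypB w' z = 0 := by
      intro z
      set z' := z + (-(hypB u z / β)) • p + (-(hypB p z / β)) • u with hz'def
      have hpz' : hypB p z' = 0 := by
        rw [hz'def, hypB_add_right, hypB_add_right, hypB_smul_right, hypB_smul_right,
          hypB_self, hpQ]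
        field_simp; rw [← hβdef]; ring
      have huz' : hypB u z' = 0 := by
        rw [hz'def, hypB_add_right, hypB_add_right, hypB_smul_right, hypB_smul_right,
          hypB_symm u p, hypB_self, huQ, ← hβdef]
        field_simp; ring
      have hwz' : hypB w z' = 0 := key z' hpz' huz'
      have e1 : hypB w' z' = 0 := by
        rw [hypB_symm w' z', hw'def, hypB_add_right, hypB_add_right, hypB_smul_right,
          hypB_smul_right, hypB_symm z' w, hwz', hypB_symm z' p, hpz', hypB_symm z' u, huz']
        ring
      rw [hz'def, hypB_add_right, hypB_add_right, hypB_smul_right, hypB_smul_right,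
        hypB_symm w' p, hpw', hypB_symm w' u, huw'] at e1
      simpa using e1
    have hw'0 : w' = 0 := by
      have h1 : ∀ i, w'.1 i = 0 := by
        intro i
        have := hall ((0 : Fin n → K), fun k => if k = i then 1 else 0)
        rw [hypB_apply] at this
        simpa [mul_ite, Finset.sum_ite_eq'] using this
      have h2 : ∀ i, w'.2 i = 0 := by
        intro i
        have := hall ((fun k => if k = i then 1 else 0), (0 : Fin n → K))
        rw [hypB_apply] at this
        simpa [mul_ite, Finset.sum_ite_eq'] using this
      have : w' = (w'.1, w'.2) := rfl
      rw [Prod.ext_iff]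
      exact ⟨funext h1, funext h2⟩
    have hwrep : w = aa • p + bb • u := by
      have h := hw'0
      rw [hw'def] at h
      have h' : w - (aa • p + bb • u) = 0 := by
        rw [← h]; module
      exact sub_eq_zero.mp h'
    have hQrep : hypQ (aa • p + bb • u) = aa * bb * β := by
      rw [hypQ_add, hypQ_smul, hypQ_smul, hpQ, huQ, hypB_smul_right,
        hypB_symm (aa • p) u, hypB_smul_right, hypB_symm u p, ← hβdef]
      ring
    rw [hwrep, hQrep] at hwQ
    have hab : aa = 0 ∨ bb = 0 := by
      rcases mul_eq_zero.mp ((mul_eq_zero.mp hwQ).resolve_right hpu) with h | h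
      · exact Or.inl h
      · exact Or.inr h
    rcases hab with ha | hb
    · right
      refine ⟨bb, ?_, by rw [hwrep, ha, zero_smul, zero_add]⟩
      intro hbb
      apply hw0
      rw [hwrep, ha, hbb, zero_smul, zero_smul, add_zero]
    · left
      refine ⟨aa, ?_, by rw [hwrep, hb, zero_smul, add_zero]⟩
      intro haa
      apply hw0
      rw [hwrep, hb, haa, zero_smul, zero_smul, add_zero]
  · rintro (⟨c, hc, rfl⟩ | ⟨c, hc, rfl⟩)
    · refine ⟨smul_ne_zero hc hp0, by rw [hypQ_smul, hpQ, mul_zero], fun v _ _ hpv _ => ?_⟩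
      rw [hypB_symm, hypB_smul_right, hypB_symm v p, hpv, mul_zero]
    · refine ⟨smul_ne_zero hc hu0, by rw [hypQ_smul, huQ, mul_zero], fun v _ _ _ huv => ?_⟩
      rw [hypB_symm, hypB_smul_right, hypB_symm v u, huv, mul_zero]
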